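/- Let C be a covering of a finite set U and M(C) the transversal matroid induced by C. For every x ∈ U, if |cl_{M(C)}({x})| ≥ 2, then there exists exactly one block K ∈ C with cl_{M(C)}({x}) ⊆ K. -/

import Mathlib

open Set

/-- The rank function of a matroid: the maximum cardinality of an independent subset. -/
noncomputable def mrk {α : Type*} (M : Matroid α) (X : Set α) : ℕ :=
  sSup {n : ℕ | ∃ I ⊆ X, M.Indep I ∧ I.ncard = n}

/-- `M` is the transversal matroid (on ground set `univ`) induced by the family `𝒞` of
subsets: independent sets are exactly the partial transversals of `𝒞`. -/
def IsTransversalMatroidOf {α : Type*} (M : Matroid α) (𝒞 : Set (Set α)) : Prop :=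
  M.E = Set.univ ∧
    ∀ I : Set α, M.Indep I ↔
      ∃ f : α → Set α, Set.InjOn f I ∧ ∀ x ∈ I, f x ∈ 𝒞 ∧ x ∈ f x

/-- A hyperplane of a matroid on ground set `univ`: a flat of rank `r(U) - 1`. -/
def IsHyperplaneOf {α : Type*} (M : Matroid α) (H : Set α) : Prop :=
  M.IsFlat H ∧ mrk M H = mrk M Set.univ - 1

/-- A two-element set with representatives in two distinct blocks is a partial transversal. -/
lemma pair_indep_of_blocks {α : Type*} {𝒞 : Set (Set α)} {M : Matroid α}
    (hIndep : ∀ I : Set α, M.Indep I ↔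
      ∃ f : α → Set α, Set.InjOn f I ∧ ∀ x ∈ I, f x ∈ 𝒞 ∧ x ∈ f x)
    {a b : α} {K1 K2 : Set α} (hab : a ≠ b) (hK12 : K1 ≠ K2)
    (hK1 : K1 ∈ 𝒞) (hK2 : K2 ∈ 𝒞) (ha : a ∈ K1) (hb : b ∈ K2) :
    M.Indep {a, b} := by
  classical
  rw [hIndep]
  refine ⟨fun w => if w = a then K1 else K2, ?_, ?_⟩
  · intro u hu v hv huv
    simp only [mem_insert_iff, mem_singleton_iff] at hu hv
    rcases hu with rfl | rfl <;> rcases hv with rfl | rfl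
    · rfl
    · simp only [if_pos rfl, if_neg (Ne.symm hab)] at huv; exact absurd huv hK12
    · simp only [if_pos rfl, if_neg (Ne.symm hab)] at huv; exact absurd huv.symm hK12
    · rfl
  · intro w hw
    simp only [mem_insert_iff, mem_singleton_iff] at hw
    rcases hw with rfl | rfl
    · simp only [if_pos rfl]; exact ⟨hK1, ha⟩
    · simp only [if_neg (Ne.symm hab)]; exact ⟨hK2, hb⟩

theorem closure_singleton_subset_unique_block {α : Type*} [Fintype α]
    (𝒞 : Set (Set α)) (hne : ∅ ∉ 𝒞) (hcov : ⋃₀ 𝒞 = Set.univ)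
    (M : Matroid α) (hM : IsTransversalMatroidOf M 𝒞) (x : α)
    (hcard : 2 ≤ (M.closure {x}).ncard) :
    ∃! K : Set α, K ∈ 𝒞 ∧ M.closure {x} ⊆ K := by
  obtain ⟨hE, hIndep⟩ := hM
  have hblock : ∀ z : α, ∃ K ∈ 𝒞, z ∈ K := by
    intro z
    have : z ∈ ⋃₀ 𝒞 := by rw [hcov]; trivial
    simpa [Set.mem_sUnion] using this
  obtain ⟨K0, hK0, hxK0⟩ := hblock x
  have hx1 : M.Indep {x} := by
    rw [hIndep]
    exact ⟨fun _ => K0, Set.injOn_singleton _ _, by rintro z rfl; exact ⟨hK0, hxK0⟩⟩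
  -- for z ∈ cl({x}) with z ≠ x, {z, x} is dependent
  have hdep : ∀ z ∈ M.closure {x}, z ≠ x → ¬ M.Indep {z, x} := by
    intro z hz hzx hind
    have : M.Indep (insert z {x}) := hind
    rw [hx1.insert_indep_iff_of_notMem (by simpa using hzx)] at this
    exact this.2 hz
  -- key: any z ∈ cl({x}) belongs to every block containing x
  have hkey : ∀ z ∈ M.closure {x}, ∀ K ∈ 𝒞, x ∈ K → z ∈ K := by
    intro z hz K hK hxK
    rcases eq_or_ne z x with rfl | hzx
    · exact hxK
    obtain ⟨Kz, hKz, hzKz⟩ := hblock z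
    rcases eq_or_ne Kz K with rfl | hKK
    · exact hzKz
    exact absurd (pair_indep_of_blocks hIndep hzx hKK hKz hK hzKz hxK) (hdep z hz hzx)
  have hxcl : x ∈ M.closure {x} := M.mem_closure_self x (by rw [hE]; trivial)
  obtain ⟨y, hycl, hyx⟩ :=
    Set.exists_ne_of_one_lt_ncard (by omega : 1 < (M.closure {x}).ncard) x
  refine ⟨K0, ⟨hK0, fun z hz => hkey z hz K0 hK0 hxK0⟩, ?_⟩
  rintro K' ⟨hK', hsub⟩
  by_contra hne'
  exact absurd (pair_indep_of_blocks hIndep hyx (fun h => hne' h.symm) hK0 hK'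
    (hkey y hycl K0 hK0 hxK0) (hsub hxcl)) (hdep y hycl hyx)
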